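/- The sequence H₂(A,M) → H₂((A,B,ε);M) → H₁(B,M) is exact at H₂((A,B,ε);M): the kernel of Ψ equals the image of Φ². -/

import Mathlib

/-!
STATEMENT 10: The sequence H₂(A,M) → H₂((A,B,ε);M) → H₁(B,M) is exact at
H₂((A,B,ε);M): the kernel of Ψ equals the image of Φ².

Here (A,B,ε) is a triple over a commutative ring k and M is an A-bimodule on which k
acts centrally and which is B-symmetric; H₂(A,M) = ker d₂ / im d₃,
H₂((A,B,ε);M) = ker ∂₂ / im ∂₃ and H₁(B,M) = (M⊗B)/im d₂^B.
Φ² is induced by m⊗a⊗b ↦ m⊗a⊗b⊗1_B and Ψ by m⊗a⊗b⊗α ↦ bma⊗α.  All chain maps and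
the induced maps on homology are quantified universally, characterized by their
values on pure tensors (resp. on classes of cycles).
-/

open TensorProduct MulOpposite

set_option maxSynthPendingDepth 8
set_option maxHeartbeats 2000000
set_option maxRecDepth 10000


section helpers
variable {k : Type*} [CommRing k]
variable {M N Q R P : Type*}
  [AddCommGroup M] [Module k M] [AddCommGroup N] [Module k N]
  [AddCommGroup Q] [Module k Q] [AddCommGroup R] [Module k R]
  [AddCommGroup P] [Module k P]

noncomputable def mk2t (f : M → N → P)
    (h1 : ∀ m m' n, f (m + m') n = f m n + f m' n)
    (h2 : ∀ (c : k) m n, f (c • m) n = c • f m n)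
    (h3 : ∀ m n n', f m (n + n') = f m n + f m n')
    (h4 : ∀ (c : k) m n, f m (c • n) = c • f m n) :
    M ⊗[k] N →ₗ[k] P :=
  TensorProduct.lift (LinearMap.mk₂ k f h1 h2 h3 h4)

@[simp] lemma mk2t_apply (f : M → N → P) (h1) (h2) (h3) (h4) (m : M) (n : N) :
    mk2t (k := k) f h1 h2 h3 h4 (m ⊗ₜ[k] n) = f m n := rfl

noncomputable def mk3t (f : M → N → Q → P)
    (h1 : ∀ m m' n q, f (m + m') n q = f m n q + f m' n q)
    (h2 : ∀ (c : k) m n q, f (c • m) n q = c • f m n q)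
    (h3 : ∀ m n n' q, f m (n + n') q = f m n q + f m n' q)
    (h4 : ∀ (c : k) m n q, f m (c • n) q = c • f m n q)
    (h5 : ∀ m n q q', f m n (q + q') = f m n q + f m n q')
    (h6 : ∀ (c : k) m n q, f m n (c • q) = c • f m n q) :
    M ⊗[k] N ⊗[k] Q →ₗ[k] P :=
  (TensorProduct.lift
    { toFun := fun m => mk2t (f m) (h3 m) (fun c => h4 c m) (h5 m) (fun c => h6 c m)
      map_add' := fun m m' => by
        ext n q
        simp [h1]
      map_smul' := fun c m => by
        ext n q
        simp [h2] }) ∘ₗ (TensorProduct.assoc k M N Q).toLinearMap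

@[simp] lemma mk3t_apply (f : M → N → Q → P) (h1) (h2) (h3) (h4) (h5) (h6)
    (m : M) (n : N) (q : Q) :
    mk3t (k := k) f h1 h2 h3 h4 h5 h6 (m ⊗ₜ[k] n ⊗ₜ[k] q) = f m n q := rfl

noncomputable def mk4t (f : M → N → Q → R → P)
    (h1 : ∀ m m' n q r, f (m + m') n q r = f m n q r + f m' n q r)
    (h2 : ∀ (c : k) m n q r, f (c • m) n q r = c • f m n q r)
    (h3 : ∀ m n n' q r, f m (n + n') q r = f m n q r + f m n' q r)
    (h4 : ∀ (c : k) m n q r, f m (c • n) q r = c • f m n q r)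
    (h5 : ∀ m n q q' r, f m n (q + q') r = f m n q r + f m n q' r)
    (h6 : ∀ (c : k) m n q r, f m n (c • q) r = c • f m n q r)
    (h7 : ∀ m n q r r', f m n q (r + r') = f m n q r + f m n q r')
    (h8 : ∀ (c : k) m n q r, f m n q (c • r) = c • f m n q r) :
    M ⊗[k] N ⊗[k] Q ⊗[k] R →ₗ[k] P :=
  (TensorProduct.lift
    { toFun := fun m => mk3t (f m) (h3 m) (fun c => h4 c m) (h5 m) (fun c => h6 c m)
        (h7 m) (fun c => h8 c m)
      map_add' := fun m m' => by
        ext n q r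
        simp [h1, mk3t]
      map_smul' := fun c m => by
        ext n q r
        simp [h2, mk3t] }) ∘ₗ (TensorProduct.assoc k M (N ⊗[k] Q) R).toLinearMap
      ∘ₗ TensorProduct.map (TensorProduct.assoc k M N Q).toLinearMap LinearMap.id

@[simp] lemma mk4t_apply (f : M → N → Q → R → P) (h1) (h2) (h3) (h4) (h5) (h6) (h7) (h8)
    (m : M) (n : N) (q : Q) (r : R) :
    mk4t (k := k) f h1 h2 h3 h4 h5 h6 h7 h8 (m ⊗ₜ[k] n ⊗ₜ[k] q ⊗ₜ[k] r) = f m n q r := rfl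

end helpers

theorem secondaryHochschild_exact_at_H2
    (k : Type*) [CommRing k]
    (A : Type*) [Ring A] [Algebra k A]
    (B : Type*) [CommRing B] [Algebra k B]
    (ε : B →ₐ[k] A) (hcen : ∀ (b : B) (a : A), ε b * a = a * ε b)
    (M : Type*) [AddCommGroup M] [Module k M]
    [Module A M] [Module Aᵐᵒᵖ M] [SMulCommClass A Aᵐᵒᵖ M]
    [IsScalarTower k A M] [IsScalarTower k Aᵐᵒᵖ M]
    (hsymm : ∀ (b : B) (m : M), ε b • m = op (ε b) • m)
    -- the usual Hochschild differentials d₂, d₃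
    (d2 : M ⊗[k] A ⊗[k] A →ₗ[k] M ⊗[k] A)
    (hd2 : ∀ (m : M) (a b : A),
      d2 (m ⊗ₜ[k] a ⊗ₜ[k] b) =
        (op a • m) ⊗ₜ[k] b - m ⊗ₜ[k] (a * b) + (b • m) ⊗ₜ[k] a)
    (d3 : M ⊗[k] A ⊗[k] A ⊗[k] A →ₗ[k] M ⊗[k] A ⊗[k] A)
    (hd3 : ∀ (m : M) (a b c : A),
      d3 (m ⊗ₜ[k] a ⊗ₜ[k] b ⊗ₜ[k] c) =
        (op a • m) ⊗ₜ[k] b ⊗ₜ[k] c - m ⊗ₜ[k] (a * b) ⊗ₜ[k] c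
        + m ⊗ₜ[k] a ⊗ₜ[k] (b * c) - (c • m) ⊗ₜ[k] a ⊗ₜ[k] b)
    -- the secondary Hochschild differentials ∂₂, ∂₃
    (p2 : M ⊗[k] A ⊗[k] A ⊗[k] B →ₗ[k] M ⊗[k] A)
    (hp2 : ∀ (m : M) (a b : A) (α : B),
      p2 (m ⊗ₜ[k] a ⊗ₜ[k] b ⊗ₜ[k] α) =
        (op (a * ε α) • m) ⊗ₜ[k] b - m ⊗ₜ[k] (a * ε α * b) + ((b * ε α) • m) ⊗ₜ[k] a)
    (p3 : M ⊗[k] A ⊗[k] A ⊗[k] A ⊗[k] B ⊗[k] B ⊗[k] B →ₗ[k] M ⊗[k] A ⊗[k] A ⊗[k] B)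
    (hp3 : ∀ (m : M) (a b c : A) (α β γ : B),
      p3 (m ⊗ₜ[k] a ⊗ₜ[k] b ⊗ₜ[k] c ⊗ₜ[k] α ⊗ₜ[k] β ⊗ₜ[k] γ) =
        (op (a * ε (α * β)) • m) ⊗ₜ[k] b ⊗ₜ[k] c ⊗ₜ[k] γ
        - m ⊗ₜ[k] (a * ε α * b) ⊗ₜ[k] c ⊗ₜ[k] (β * γ)
        + m ⊗ₜ[k] a ⊗ₜ[k] (b * ε γ * c) ⊗ₜ[k] (α * β)
        - ((c * ε (β * γ)) • m) ⊗ₜ[k] a ⊗ₜ[k] b ⊗ₜ[k] α)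
    -- the Hochschild differential d₂^B for B with coefficients in M
    (d2B : M ⊗[k] B ⊗[k] B →ₗ[k] M ⊗[k] B)
    (hd2B : ∀ (m : M) (α β : B),
      d2B (m ⊗ₜ[k] α ⊗ₜ[k] β) =
        (op (ε α) • m) ⊗ₜ[k] β - m ⊗ₜ[k] (α * β) + (ε β • m) ⊗ₜ[k] α)
    -- the chain-level map m⊗a⊗b ↦ m⊗a⊗b⊗1_B
    (ι : M ⊗[k] A ⊗[k] A →ₗ[k] M ⊗[k] A ⊗[k] A ⊗[k] B)
    (hι : ∀ (m : M) (a b : A),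
      ι (m ⊗ₜ[k] a ⊗ₜ[k] b) = m ⊗ₜ[k] a ⊗ₜ[k] b ⊗ₜ[k] (1 : B))
    -- the chain-level map m⊗a⊗b⊗α ↦ bma⊗α
    (ψ : M ⊗[k] A ⊗[k] A ⊗[k] B →ₗ[k] M ⊗[k] B)
    (hψ : ∀ (m : M) (a b : A) (α : B),
      ψ (m ⊗ₜ[k] a ⊗ₜ[k] b ⊗ₜ[k] α) = (b • op a • m) ⊗ₜ[k] α)
    -- the induced map Φ² : H₂(A,M) → H₂((A,B,ε);M)
    (Phi2 : (↥(LinearMap.ker d2) ⧸ (LinearMap.range d3).comap (LinearMap.ker d2).subtype)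
        →ₗ[k] (↥(LinearMap.ker p2) ⧸ (LinearMap.range p3).comap (LinearMap.ker p2).subtype))
    (hPhi2 : ∀ (x : M ⊗[k] A ⊗[k] A) (hx : x ∈ LinearMap.ker d2) (hx' : ι x ∈ LinearMap.ker p2),
      Phi2 (Submodule.Quotient.mk ⟨x, hx⟩) = Submodule.Quotient.mk ⟨ι x, hx'⟩)
    -- the induced map Ψ : H₂((A,B,ε);M) → H₁(B,M)
    (Psi : (↥(LinearMap.ker p2) ⧸ (LinearMap.range p3).comap (LinearMap.ker p2).subtype)
        →ₗ[k] ((M ⊗[k] B) ⧸ LinearMap.range d2B))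
    (hPsi : ∀ (x : M ⊗[k] A ⊗[k] A ⊗[k] B) (hx : x ∈ LinearMap.ker p2),
      Psi (Submodule.Quotient.mk ⟨x, hx⟩) = Submodule.Quotient.mk (ψ x)) :
    LinearMap.ker Psi = LinearMap.range Phi2 := by
  classical
  have hεa : ∀ x y : B, ε (x + y) = ε x + ε y := map_add ε
  have hεm : ∀ x y : B, ε (x * y) = ε x * ε y := map_mul ε
  have hεs : ∀ (c : k) (x : B), ε (c • x) = c • ε x := fun c x => map_smul ε.toLinearMap c x
  have hck : ∀ (c : k) (x : Aᵐᵒᵖ) (m : M), x • c • m = c • x • m :=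
    fun c x m => (smul_comm c x m).symm
  have hcA : ∀ (c : k) (x : A) (m : M), x • c • m = c • x • m :=
    fun c x m => (smul_comm c x m).symm
  have I1 : ∀ z : M ⊗[k] A ⊗[k] A, p2 (ι z) = d2 z := by
    intro z
    have h : p2 ∘ₗ ι = d2 := by
      ext m a b
      simp [hι, hp2, hd2]
    calc p2 (ι z) = (p2 ∘ₗ ι) z := rfl
      _ = d2 z := by rw [h]
  -- σ : M⊗B → C₂, n⊗α ↦ n⊗1⊗1⊗α
  obtain ⟨σ, hσ⟩ : ∃ f : M ⊗[k] B →ₗ[k] M ⊗[k] A ⊗[k] A ⊗[k] B,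
      ∀ (n : M) (α : B), f (n ⊗ₜ[k] α) = n ⊗ₜ[k] (1:A) ⊗ₜ[k] (1:A) ⊗ₜ[k] α := by
    refine ⟨mk2t (k := k) (fun n α => n ⊗ₜ[k] (1:A) ⊗ₜ[k] (1:A) ⊗ₜ[k] α) ?_ ?_ ?_ ?_,
      fun n α => rfl⟩
    all_goals (intros; (try simp only [hεa, hεs, hck, hcA, smul_mul_assoc, mul_smul_comm, op_smul, op_add, smul_assoc, smul_tmul, tmul_smul, smul_sub, smul_add, add_mul, mul_add, add_smul, add_tmul, tmul_add, sub_tmul, tmul_sub]) <;> abel)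
  -- ρ : C₂ → M⊗B, m⊗a⊗b⊗α ↦ (op (a*b) • m)⊗α
  obtain ⟨ρ, hρ⟩ : ∃ f : M ⊗[k] A ⊗[k] A ⊗[k] B →ₗ[k] M ⊗[k] B,
      ∀ (m : M) (a b : A) (α : B), f (m ⊗ₜ[k] a ⊗ₜ[k] b ⊗ₜ[k] α)
        = (op (a * b) • m) ⊗ₜ[k] α := by
    refine ⟨mk4t (k := k) (fun m a b α => (op (a * b) • m) ⊗ₜ[k] α)
      ?_ ?_ ?_ ?_ ?_ ?_ ?_ ?_, fun m a b α => rfl⟩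
    all_goals (intros; (try simp only [hεa, hεs, hck, hcA, smul_mul_assoc, mul_smul_comm, op_smul, op_add, smul_assoc, smul_tmul, tmul_smul, smul_sub, smul_add, add_mul, mul_add, add_smul, add_tmul, tmul_add, sub_tmul, tmul_sub]) <;> abel)
  -- η : C₂ → M⊗A⊗A
  obtain ⟨η, hη⟩ : ∃ f : M ⊗[k] A ⊗[k] A ⊗[k] B →ₗ[k] M ⊗[k] A ⊗[k] A,
      ∀ (m : M) (a b : A) (α : B), f (m ⊗ₜ[k] a ⊗ₜ[k] b ⊗ₜ[k] α)
        = m ⊗ₜ[k] (a * b) ⊗ₜ[k] (ε α) - (ε α • m) ⊗ₜ[k] (a * b) ⊗ₜ[k] (1:A)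
          - (op (a * ε α) • m) ⊗ₜ[k] b ⊗ₜ[k] (1:A) + (ε α • m) ⊗ₜ[k] a ⊗ₜ[k] b := by
    refine ⟨mk4t (k := k) (fun m a b α =>
      m ⊗ₜ[k] (a * b) ⊗ₜ[k] (ε α) - (ε α • m) ⊗ₜ[k] (a * b) ⊗ₜ[k] (1:A)
        - (op (a * ε α) • m) ⊗ₜ[k] b ⊗ₜ[k] (1:A) + (ε α • m) ⊗ₜ[k] a ⊗ₜ[k] b)
      ?_ ?_ ?_ ?_ ?_ ?_ ?_ ?_, fun m a b α => rfl⟩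
    all_goals (intros; (try simp only [hεa, hεs, hck, hcA, smul_mul_assoc, mul_smul_comm, op_smul, op_add, smul_assoc, smul_tmul, tmul_smul, smul_sub, smul_add, add_mul, mul_add, add_smul, add_tmul, tmul_add, sub_tmul, tmul_sub]) <;> abel)
  -- H : C₂ → C₃
  obtain ⟨Hh, hHh⟩ : ∃ f : M ⊗[k] A ⊗[k] A ⊗[k] B →ₗ[k]
      M ⊗[k] A ⊗[k] A ⊗[k] A ⊗[k] B ⊗[k] B ⊗[k] B,
      ∀ (m : M) (a b : A) (α : B), f (m ⊗ₜ[k] a ⊗ₜ[k] b ⊗ₜ[k] α)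
        = m ⊗ₜ[k] a ⊗ₜ[k] b ⊗ₜ[k] (1:A) ⊗ₜ[k] (1:B) ⊗ₜ[k] α ⊗ₜ[k] (1:B)
          - m ⊗ₜ[k] (a * b) ⊗ₜ[k] (1:A) ⊗ₜ[k] (1:A) ⊗ₜ[k] (1:B) ⊗ₜ[k] (1:B) ⊗ₜ[k] α := by
    refine ⟨mk4t (k := k) (fun m a b α =>
      m ⊗ₜ[k] a ⊗ₜ[k] b ⊗ₜ[k] (1:A) ⊗ₜ[k] (1:B) ⊗ₜ[k] α ⊗ₜ[k] (1:B)
        - m ⊗ₜ[k] (a * b) ⊗ₜ[k] (1:A) ⊗ₜ[k] (1:A) ⊗ₜ[k] (1:B) ⊗ₜ[k] (1:B) ⊗ₜ[k] α)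
      ?_ ?_ ?_ ?_ ?_ ?_ ?_ ?_, fun m a b α => rfl⟩
    all_goals (intros; (try simp only [hεa, hεs, hck, hcA, smul_mul_assoc, mul_smul_comm, op_smul, op_add, smul_assoc, smul_tmul, tmul_smul, smul_sub, smul_add, add_mul, mul_add, add_smul, add_tmul, tmul_add, sub_tmul, tmul_sub]) <;> abel)
  -- τ : M⊗A⊗A → M⊗B⊗B, m⊗a⊗b ↦ (b • op a • m)⊗1⊗1
  obtain ⟨τ, hτ⟩ : ∃ f : M ⊗[k] A ⊗[k] A →ₗ[k] M ⊗[k] B ⊗[k] B,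
      ∀ (m : M) (a b : A), f (m ⊗ₜ[k] a ⊗ₜ[k] b)
        = (b • op a • m) ⊗ₜ[k] (1:B) ⊗ₜ[k] (1:B) := by
    refine ⟨mk3t (k := k) (fun m a b => (b • op a • m) ⊗ₜ[k] (1:B) ⊗ₜ[k] (1:B))
      ?_ ?_ ?_ ?_ ?_ ?_, fun m a b => rfl⟩
    all_goals (intros; (try simp only [hεa, hεs, hck, hcA, smul_mul_assoc, mul_smul_comm, op_smul, op_add, smul_assoc, smul_tmul, tmul_smul, smul_sub, smul_add, add_mul, mul_add, add_smul, add_tmul, tmul_add, sub_tmul, tmul_sub]) <;> abel)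
  -- G : M⊗B⊗B → C₃
  obtain ⟨G, hG⟩ : ∃ f : M ⊗[k] B ⊗[k] B →ₗ[k]
      M ⊗[k] A ⊗[k] A ⊗[k] A ⊗[k] B ⊗[k] B ⊗[k] B,
      ∀ (n : M) (α β : B), f (n ⊗ₜ[k] α ⊗ₜ[k] β)
        = n ⊗ₜ[k] (ε α) ⊗ₜ[k] (1:A) ⊗ₜ[k] (1:A) ⊗ₜ[k] (1:B) ⊗ₜ[k] (1:B) ⊗ₜ[k] β
          - n ⊗ₜ[k] (1:A) ⊗ₜ[k] (1:A) ⊗ₜ[k] (1:A) ⊗ₜ[k] α ⊗ₜ[k] β ⊗ₜ[k] (1:B) := by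
    refine ⟨mk3t (k := k) (fun n α β =>
      n ⊗ₜ[k] (ε α) ⊗ₜ[k] (1:A) ⊗ₜ[k] (1:A) ⊗ₜ[k] (1:B) ⊗ₜ[k] (1:B) ⊗ₜ[k] β
        - n ⊗ₜ[k] (1:A) ⊗ₜ[k] (1:A) ⊗ₜ[k] (1:A) ⊗ₜ[k] α ⊗ₜ[k] β ⊗ₜ[k] (1:B))
      ?_ ?_ ?_ ?_ ?_ ?_, fun n α β => rfl⟩
    all_goals (intros; (try simp only [hεa, hεs, hck, hcA, smul_mul_assoc, mul_smul_comm, op_smul, op_add, smul_assoc, smul_tmul, tmul_smul, smul_sub, smul_add, add_mul, mul_add, add_smul, add_tmul, tmul_add, sub_tmul, tmul_sub]) <;> abel)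
  -- ζ : M⊗B⊗B → M⊗A⊗A
  obtain ⟨ζ, hζ⟩ : ∃ f : M ⊗[k] B ⊗[k] B →ₗ[k] M ⊗[k] A ⊗[k] A,
      ∀ (n : M) (α β : B), f (n ⊗ₜ[k] α ⊗ₜ[k] β)
        = (op (ε (α * β)) • n) ⊗ₜ[k] (1:A) ⊗ₜ[k] (1:A)
          + (ε β • n) ⊗ₜ[k] (ε α) ⊗ₜ[k] (1:A) - n ⊗ₜ[k] (ε α) ⊗ₜ[k] (ε β) := by
    refine ⟨mk3t (k := k) (fun n α β =>
      (op (ε (α * β)) • n) ⊗ₜ[k] (1:A) ⊗ₜ[k] (1:A)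
        + (ε β • n) ⊗ₜ[k] (ε α) ⊗ₜ[k] (1:A) - n ⊗ₜ[k] (ε α) ⊗ₜ[k] (ε β))
      ?_ ?_ ?_ ?_ ?_ ?_, fun n α β => rfl⟩
    all_goals (intros; (try simp only [hεm, hεa, hεs, hck, hcA, smul_mul_assoc, mul_smul_comm, op_smul, op_add, smul_assoc, smul_tmul, tmul_smul, smul_sub, smul_add, add_mul, mul_add, add_smul, add_tmul, tmul_add, sub_tmul, tmul_sub]) <;> abel)
  have hε1 : ε (1:B) = 1 := map_one ε
  -- ψ ∘ σ = id
  have Iψσ : ∀ v : M ⊗[k] B, ψ (σ v) = v := by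
    intro v
    have h : ψ ∘ₗ σ = LinearMap.id := by
      ext n α
      simp [hσ, hψ]
    calc ψ (σ v) = (ψ ∘ₗ σ) v := rfl
      _ = v := by rw [h]; rfl
  -- ψ ∘ ι = d2B ∘ τ
  have I4 : ∀ z : M ⊗[k] A ⊗[k] A, ψ (ι z) = d2B (τ z) := by
    intro z
    have h : ψ ∘ₗ ι = d2B ∘ₗ τ := by
      ext m a b
      simp [hι, hψ, hτ, hd2B, hε1]
    calc ψ (ι z) = (ψ ∘ₗ ι) z := rfl
      _ = (d2B ∘ₗ τ) z := by rw [h]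
      _ = d2B (τ z) := rfl
  -- the homotopy decomposition: x = p3 (Hh x) + σ (ρ x) + ι (η x)
  have I2 : ∀ x : M ⊗[k] A ⊗[k] A ⊗[k] B, x = p3 (Hh x) + σ (ρ x) + ι (η x) := by
    intro x
    have h : LinearMap.id (R := k) (M := M ⊗[k] A ⊗[k] A ⊗[k] B)
        = p3 ∘ₗ Hh + σ ∘ₗ ρ + ι ∘ₗ η := by
      ext m a b α
      simp [hHh, hρ, hη, hσ, hp3, hι, hε1] <;> abel
    calc x = LinearMap.id (R := k) x := rfl
      _ = p3 (Hh x) + σ (ρ x) + ι (η x) := by rw [h]; rfl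
  -- σ ∘ d2B = p3 ∘ G + ι ∘ ζ
  have I3 : ∀ u : M ⊗[k] B ⊗[k] B, σ (d2B u) = p3 (G u) + ι (ζ u) := by
    intro u
    have h : σ ∘ₗ d2B = p3 ∘ₗ G + ι ∘ₗ ζ := by
      ext n α β
      simp [hd2B, hG, hζ, hσ, hp3, hι, hε1] <;> abel
    calc σ (d2B u) = (σ ∘ₗ d2B) u := rfl
      _ = p3 (G u) + ι (ζ u) := by rw [h]; rfl
  have I5 : ∀ w : M ⊗[k] A ⊗[k] A ⊗[k] A ⊗[k] B ⊗[k] B ⊗[k] B, p2 (p3 w) = 0 := by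
    intro w
    have h : p2 ∘ₗ p3 = 0 := by
      ext m a b c α β γ
      simp [hp3, hp2]
      have hE1 : (op (ε γ) * op b) • (op (ε β) * op (ε α) * op a) • m
          = (op (ε γ) * op (ε β) * (op b * (op (ε α) * op a))) • m := by
        rw [smul_smul]
        congr 1
        simp only [mul_assoc]
        rw [← mul_assoc (op b) (op (ε β)), show op b * op (ε β) = op (ε β) * op b by
          rw [← op_mul, ← op_mul, hcen], mul_assoc]
      have hE2 : a * ε α * b * (ε β * ε γ) * c = a * (ε α * ε β) * (b * ε γ * c) := by
        simp only [mul_assoc]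
        rw [← mul_assoc b (ε β), ← hcen β b, mul_assoc]
      have hE3 : (c * ε γ) • (op (ε β) * op (ε α) * op a) • m
          = (op (ε α) * op a) • (c * (ε β * ε γ)) • m := by
        rw [← smul_comm (c * (ε β * ε γ)) (op (ε α) * op a) m]
        rw [mul_assoc (op (ε β)) (op (ε α)) (op a)]
        rw [mul_smul (op (ε β)) (op (ε α) * op a) m]
        rw [← hsymm β ((op (ε α) * op a) • m)]
        rw [smul_smul (c * ε γ) (ε β) ((op (ε α) * op a) • m)]
        congr 1
        rw [mul_assoc c (ε γ) (ε β), ← hεm γ β, mul_comm γ β, hεm β γ]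
      have hE4 : (b * ε γ * c * (ε α * ε β)) • m = (b * ε α) • (c * (ε β * ε γ)) • m := by
        rw [smul_smul]
        congr 1
        simp only [mul_assoc]
        rw [← mul_assoc (ε γ) c, hcen γ c, ← mul_assoc (ε α) c, hcen α c]
        simp only [mul_assoc]
        rw [← hεm α β, ← hεm γ (α*β), ← hεm β γ, ← hεm α (β*γ),
          show γ * (α * β) = α * (β * γ) by ring]
      rw [hE1, hE2, hE3, hE4]
      abel
    calc p2 (p3 w) = (p2 ∘ₗ p3) w := rfl
      _ = 0 := by rw [h]; rfl
  apply le_antisymm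
  · -- ker Psi ≤ range Phi2
    intro q hq
    obtain ⟨⟨x, hx⟩, rfl⟩ := Submodule.Quotient.mk_surjective _ q
    rw [LinearMap.mem_ker, hPsi x hx] at hq
    have hψx : ψ x ∈ LinearMap.range d2B := (Submodule.Quotient.mk_eq_zero _).1 hq
    -- ψ (p3 (Hh x)) is a boundary
    have hkerH : p3 (Hh x) ∈ LinearMap.ker p2 := by
      rw [LinearMap.mem_ker]; exact I5 (Hh x)
    have hb1 : ψ (p3 (Hh x)) ∈ LinearMap.range d2B := by
      have h0 : (Submodule.Quotient.mk (⟨p3 (Hh x), hkerH⟩ : LinearMap.ker p2) :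
          (↥(LinearMap.ker p2) ⧸ (LinearMap.range p3).comap (LinearMap.ker p2).subtype)) = 0 := by
        rw [Submodule.Quotient.mk_eq_zero]
        exact ⟨Hh x, rfl⟩
      have h1 := hPsi (p3 (Hh x)) hkerH
      rw [h0, map_zero] at h1
      exact (Submodule.Quotient.mk_eq_zero _).1 h1.symm
    -- ψ (ι (η x)) is a boundary
    have hb2 : ψ (ι (η x)) ∈ LinearMap.range d2B := by
      rw [I4]; exact ⟨τ (η x), rfl⟩
    -- hence ρ x is a boundary
    have hρx : ρ x ∈ LinearMap.range d2B := by
      have hsum : ψ x = ψ (p3 (Hh x)) + ρ x + ψ (ι (η x)) := by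
        conv_lhs => rw [I2 x]
        rw [map_add, map_add, Iψσ]
      have : ρ x = ψ x - ψ (p3 (Hh x)) - ψ (ι (η x)) := by rw [hsum]; abel
      rw [this]
      exact sub_mem (sub_mem hψx hb1) hb2
    obtain ⟨U, hU⟩ := hρx
    have hdecomp : x = p3 (Hh x + G U) + ι (η x + ζ U) := by
      calc x = p3 (Hh x) + σ (ρ x) + ι (η x) := I2 x
        _ = p3 (Hh x) + (p3 (G U) + ι (ζ U)) + ι (η x) := by rw [← hU, I3]
        _ = p3 (Hh x + G U) + ι (η x + ζ U) := by rw [map_add, map_add]; abel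
    have hyι : ι (η x + ζ U) = x - p3 (Hh x + G U) := eq_sub_iff_add_eq'.2 hdecomp.symm
    have hyker : (η x + ζ U) ∈ LinearMap.ker d2 := by
      rw [LinearMap.mem_ker, ← I1, hyι, map_sub, I5, LinearMap.mem_ker.1 hx, sub_zero]
    have hyιker : ι (η x + ζ U) ∈ LinearMap.ker p2 := by
      rw [LinearMap.mem_ker, I1]
      exact LinearMap.mem_ker.1 hyker
    refine ⟨Submodule.Quotient.mk ⟨η x + ζ U, hyker⟩, ?_⟩
    rw [hPhi2 (η x + ζ U) hyker hyιker]
    rw [Submodule.Quotient.eq]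
    refine Submodule.mem_comap.2 ⟨-(Hh x + G U), ?_⟩
    have : ((⟨ι (η x + ζ U), hyιker⟩ : LinearMap.ker p2) - ⟨x, hx⟩ : LinearMap.ker p2)
        = ⟨ι (η x + ζ U) - x, sub_mem hyιker hx⟩ := rfl
    rw [this]
    simp only [map_neg, Submodule.coe_subtype]
    rw [hyι]
    abel
  · -- range Phi2 ≤ ker Psi
    rintro q ⟨r, rfl⟩
    obtain ⟨⟨z, hz⟩, rfl⟩ := Submodule.Quotient.mk_surjective _ r
    have hzι : ι z ∈ LinearMap.ker p2 := by
      rw [LinearMap.mem_ker, I1]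
      exact LinearMap.mem_ker.1 hz
    rw [LinearMap.mem_ker, hPhi2 z hz hzι, hPsi (ι z) hzι, I4 z]
    exact (Submodule.Quotient.mk_eq_zero _).2 ⟨τ z, rfl⟩
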